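/- Let F : ℝ^{2d} → ℂ satisfy |F(u)| ≤ ∫_{ℝ^{2d}} exp(−ε|u − χ(z)|) exp(−h|z|) dz for all u, where χ : ℝ^{2d} → ℝ^{2d} is bi-Lipschitz and ε, h > 0. Then there exist C, ε''' > 0 such that |F(u)| ≤ C exp(−ε'''|u|) for all u ∈ ℝ^{2d}. -/

import Mathlib

open Real MeasureTheory

lemma integrable_exp_neg_mul_norm_eucl (n : ℕ) {b : ℝ} (hb : 0 < b) :
    Integrable (fun x : EuclideanSpace ℝ (Fin n) => Real.exp (-b * ‖x‖)) := by
  have hm : ((Module.finrank ℝ (EuclideanSpace ℝ (Fin n)) : ℝ)) < ((n + 1 : ℕ) : ℝ) := by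
    simp [finrank_euclideanSpace]
  have hint := integrable_one_add_norm (E := EuclideanSpace ℝ (Fin n)) (μ := volume)
      (r := ((n + 1 : ℕ) : ℝ)) hm
  refine ((hint.const_mul (((n+1).factorial : ℝ) / b ^ (n+1) * Real.exp b)).mono'
      ?_ ?_)
  · exact (Real.continuous_exp.comp (continuous_const.mul continuous_norm)).aestronglyMeasurable
  · filter_upwards with x
    have hx : (0:ℝ) ≤ ‖x‖ := norm_nonneg x
    have h1 : (0:ℝ) < 1 + ‖x‖ := by linarith
    rw [Real.norm_eq_abs, abs_of_nonneg (Real.exp_pos _).le]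
    have key : (b * (1 + ‖x‖)) ^ (n+1) / ((n+1).factorial : ℝ) ≤ Real.exp (b * (1 + ‖x‖)) :=
      Real.pow_div_factorial_le_exp _ (by positivity) _
    have h2 : Real.exp (-(b * (1 + ‖x‖))) ≤ ((n+1).factorial : ℝ) / (b * (1 + ‖x‖)) ^ (n+1) := by
      rw [Real.exp_neg]
      have hpos : (0:ℝ) < (b * (1 + ‖x‖)) ^ (n+1) / ((n+1).factorial : ℝ) := by positivity
      have := one_div_le_one_div_of_le hpos key
      rw [one_div_div] at this
      rw [inv_eq_one_div]
      exact this
    have h3 : Real.exp (-b * ‖x‖) = Real.exp b * Real.exp (-(b * (1 + ‖x‖))) := by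
      rw [← Real.exp_add]; ring_nf
    rw [h3]
    have h4 : (1 + ‖x‖) ^ (-((n + 1 : ℕ) : ℝ)) = ((1 + ‖x‖) ^ (n+1))⁻¹ := by
      rw [Real.rpow_neg h1.le, Real.rpow_natCast]
    rw [h4]
    calc Real.exp b * Real.exp (-(b * (1 + ‖x‖)))
        ≤ Real.exp b * (((n+1).factorial : ℝ) / (b * (1 + ‖x‖)) ^ (n+1)) := by
          apply mul_le_mul_of_nonneg_left h2 (Real.exp_pos _).le
      _ = ((n+1).factorial : ℝ) / b ^ (n+1) * Real.exp b * ((1 + ‖x‖) ^ (n+1))⁻¹ := by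
          rw [mul_pow]; field_simp

theorem exp_decay_of_integral_bound (d : ℕ)
    (χ ψ : EuclideanSpace ℝ (Fin (2 * d)) → EuclideanSpace ℝ (Fin (2 * d)))
    (K K' : NNReal) (hχ : LipschitzWith K χ) (hψ : LipschitzWith K' ψ)
    (hl : Function.LeftInverse ψ χ) (hr : Function.RightInverse ψ χ)
    (F : EuclideanSpace ℝ (Fin (2 * d)) → ℂ)
    (ε h : ℝ) (hε : 0 < ε) (hh : 0 < h)
    (hF : ∀ u, ‖F u‖ ≤
      ∫ z : EuclideanSpace ℝ (Fin (2 * d)),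
        Real.exp (-ε * ‖u - χ z‖) * Real.exp (-h * ‖z‖)) :
    ∃ C > 0, ∃ ε''' > 0, ∀ u,
      ‖F u‖ ≤ C * Real.exp (-ε''' * ‖u‖) := by
  set c : ℝ := ‖χ 0‖ with hc
  have hKnn : (0:ℝ) ≤ (K : ℝ) := K.coe_nonneg
  set δ : ℝ := min (ε/2) (h / (2 * ((K:ℝ) + 1))) with hδdef
  have hδpos : 0 < δ := by
    apply lt_min (by linarith)
    positivity
  have hδε : δ ≤ ε / 2 := min_le_left _ _
  have hδK : δ * ((K:ℝ) + 1) ≤ h / 2 := by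
    have := min_le_right (ε/2) (h / (2 * ((K:ℝ) + 1)))
    rw [le_div_iff₀ (by positivity)] at this
    linarith
  -- integrability of the majorant
  have hint : Integrable (fun z : EuclideanSpace ℝ (Fin (2 * d)) => Real.exp (-(h/2) * ‖z‖)) :=
    integrable_exp_neg_mul_norm_eucl (2*d) (by linarith)
  set I : ℝ := ∫ z : EuclideanSpace ℝ (Fin (2 * d)), Real.exp (-(h/2) * ‖z‖) with hI
  have hIpos : 0 < I := by
    rw [hI, integral_pos_iff_support_of_nonneg (fun z => (Real.exp_pos _).le) hint]
    have : Function.support (fun z : EuclideanSpace ℝ (Fin (2 * d)) => Real.exp (-(h/2) * ‖z‖)) = Set.univ := by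
      ext z; simp [Function.mem_support, (Real.exp_pos _).ne']
    rw [this]
    exact isOpen_univ.measure_pos volume Set.univ_nonempty
  refine ⟨Real.exp (δ * c) * I, by positivity, δ, hδpos, fun u => ?_⟩
  refine le_trans (hF u) ?_
  have hpt : ∀ z : EuclideanSpace ℝ (Fin (2 * d)), Real.exp (-ε * ‖u - χ z‖) * Real.exp (-h * ‖z‖)
      ≤ Real.exp (δ * c - δ * ‖u‖) * Real.exp (-(h/2) * ‖z‖) := by
    intro z
    rw [← Real.exp_add, ← Real.exp_add, Real.exp_le_exp]
    have ha : (0:ℝ) ≤ ‖u - χ z‖ := norm_nonneg _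
    have hb : (0:ℝ) ≤ ‖z‖ := norm_nonneg _
    have h1 : ‖u‖ ≤ ‖u - χ z‖ + ‖χ z‖ := by
      have := norm_sub_norm_le u (χ z); linarith
    have h2 : ‖χ z‖ ≤ c + (K:ℝ) * ‖z‖ := by
      have := hχ.dist_le_mul z 0
      rw [dist_eq_norm, dist_eq_norm] at this
      have h3 := norm_sub_norm_le (χ z) (χ 0)
      simp only [sub_zero] at this
      linarith
    nlinarith [mul_le_mul_of_nonneg_left (h1.trans (by linarith : ‖u - χ z‖ + ‖χ z‖ ≤ ‖u - χ z‖ + c + (K:ℝ) * ‖z‖)) hδpos.le]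
  have hmono : (∫ z : EuclideanSpace ℝ (Fin (2 * d)), Real.exp (-ε * ‖u - χ z‖) * Real.exp (-h * ‖z‖))
      ≤ ∫ z : EuclideanSpace ℝ (Fin (2 * d)), Real.exp (δ * c - δ * ‖u‖) * Real.exp (-(h/2) * ‖z‖) := by
    apply integral_mono_of_nonneg
    · filter_upwards with z; positivity
    · exact hint.const_mul _
    · filter_upwards with z; exact hpt z
  refine hmono.trans (le_of_eq ?_)
  rw [integral_const_mul, ← hI, Real.exp_sub]
  have h5 : Real.exp (-δ * ‖u‖) = (Real.exp (δ * ‖u‖))⁻¹ := by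
    rw [← Real.exp_neg]; ring_nf
  rw [h5, div_eq_mul_inv]
  ring
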